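/- arXiv:1910.12996 — 2 statements merged into one kernel-verified Lean document; each statement's English description precedes it below -/
import Mathlib

section
/- The map 𝓑 : (f,g) ↦ 𝓑(f,g) from pairs of meromorphic functions to holomorphic Legendrian maps is not continuous: with M = ℂ, f(x) = x² and g_ε(x) = (x+ε)², the curve 𝓑(f,g_ε)(x) = [x+ε : (1/2)x(x²-ε²) : (x+ε)³ : x] satisfies 𝓑(f,g_ε)(0) = [1:0:ε²:0] for ε ≠ 0, whereas 𝓑(f,g₀)(0) = [1:0:0:1]. In particular, lim_{ε→0} 𝓑(f,g_ε)(0) = [1:0:0:0] ≠ 𝓑(f,g₀)(0). -/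
open Filter Topology

/-- With f(x) = x² and g_ε(x) = (x+ε)², the Legendrian curve 𝓑(f,g_ε) in ℂP³ is
given (in homogeneous coordinates) by x ↦ [x+ε : ½x(x²-ε²) : (x+ε)³ : x]. -/
noncomputable def Bcurve (ε x : ℂ) : Fin 4 → ℂ :=
  ![x + ε, (1/2) * x * (x ^ 2 - ε ^ 2), (x + ε) ^ 3, x]

lemma Bcurve_ne_zero_of_ne {ε : ℂ} (hε : ε ≠ 0) : Bcurve ε 0 ≠ 0 := by
  intro h
  exact hε (by simpa [Bcurve] using congrFun h 0)

lemma vecA_ne_zero (ε : ℂ) : (![1, 0, ε ^ 2, 0] : Fin 4 → ℂ) ≠ 0 := by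
  intro h
  simpa using congrFun h 0

lemma Bcurve_zero_ne_zero {x : ℂ} (hx : x ≠ 0) : Bcurve 0 x ≠ 0 := by
  intro h
  exact hx (by simpa [Bcurve] using congrFun h 3)

lemma vecB_ne_zero (x : ℂ) : (![1, (1/2) * x ^ 2, x ^ 2, 1] : Fin 4 → ℂ) ≠ 0 := by
  intro h
  simpa using congrFun h 0

lemma vecC_ne_zero : (![1, 0, 0, 0] : Fin 4 → ℂ) ≠ 0 := by
  intro h
  simpa using congrFun h 0

lemma vecD_ne_zero : (![1, 0, 0, 1] : Fin 4 → ℂ) ≠ 0 := by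
  intro h
  simpa using congrFun h 0

/-- The map (f,g) ↦ 𝓑(f,g) is not continuous: 𝓑(f,g_ε)(0) = [1:0:ε²:0] for ε ≠ 0,
whereas (after cancelling the common factor x) 𝓑(f,g₀) = [1:½x²:x²:1] and
𝓑(f,g₀)(0) = [1:0:0:1]; the limit as ε → 0 of 𝓑(f,g_ε)(0) is [1:0:0:0] ≠ [1:0:0:1]. -/
theorem stmt9 :
    (∀ ε : ℂ, ∀ hε : ε ≠ 0,
      Projectivization.mk ℂ (Bcurve ε 0) (Bcurve_ne_zero_of_ne hε)
        = Projectivization.mk ℂ ![1, 0, ε ^ 2, 0] (vecA_ne_zero ε)) ∧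
    (∀ x : ℂ, ∀ hx : x ≠ 0,
      Projectivization.mk ℂ (Bcurve 0 x) (Bcurve_zero_ne_zero hx)
        = Projectivization.mk ℂ ![1, (1/2) * x ^ 2, x ^ 2, 1] (vecB_ne_zero x)) ∧
    Projectivization.mk ℂ ![1, (1/2) * (0:ℂ) ^ 2, (0:ℂ) ^ 2, 1] (vecB_ne_zero 0)
      = Projectivization.mk ℂ ![1, 0, 0, 1] vecD_ne_zero ∧
    Tendsto (fun ε : ℂ => (![1, 0, ε ^ 2, 0] : Fin 4 → ℂ)) (𝓝 0)
      (𝓝 (![1, 0, 0, 0] : Fin 4 → ℂ)) ∧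
    Projectivization.mk ℂ ![1, 0, 0, 0] vecC_ne_zero
      ≠ Projectivization.mk ℂ ![1, 0, 0, 1] vecD_ne_zero := by
  refine ⟨?_, ?_, ?_, ?_, ?_⟩
  · intro ε hε
    rw [Projectivization.mk_eq_mk_iff]
    refine ⟨Units.mk0 ε hε, ?_⟩
    funext i
    fin_cases i <;> simp [Bcurve] <;> ring
  · intro x hx
    rw [Projectivization.mk_eq_mk_iff]
    refine ⟨Units.mk0 x hx, ?_⟩
    funext i
    fin_cases i <;> simp [Bcurve] <;> ring
  · norm_num
  · have : Continuous (fun ε : ℂ => (![1, 0, ε ^ 2, 0] : Fin 4 → ℂ)) := by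
      apply continuous_pi
      intro i
      fin_cases i <;> simp <;> fun_prop
    have h := this.tendsto 0
    simpa using h
  · intro h
    rw [Projectivization.mk_eq_mk_iff] at h
    obtain ⟨a, ha⟩ := h
    have h3 := congrFun ha 3
    have h0 := congrFun ha 0
    simp at h3 h0
    exact a.ne_zero (by simpa [h0] using h3.symm)
end

section
/- Let g be a meromorphic function near a point p of a Riemann surface such that g, viewed as a holomorphic map to ℂP¹, is an immersion at p (i.e. in a local coordinate z at p, g has order ±1 at p, or g - g(p) has a simple zero). Then for any meromorphic f, the projective curve 𝓑(f,g) = [g' : fg' - (1/2)f'g : gg' : (1/2)f'] is an immersion at p, i.e. after clearing the common factor z^m (m the minimal order of the four components), the minimal and second-minimal orders of the components differ by exactly 1. -/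
open Topology Filter

lemma analyticAt_deriv {h : ℂ → ℂ} (hh : AnalyticAt ℂ h 0) : AnalyticAt ℂ (deriv h) 0 := by
  have h1 : AnalyticAt ℂ (fun x => fderiv ℂ h x (1 : ℂ)) 0 :=
    ((ContinuousLinearMap.apply ℂ ℂ (1 : ℂ)).analyticAt _).comp hh.fderiv
  have h2 : (fun x => fderiv ℂ h x (1 : ℂ)) = deriv h := funext fun x => fderiv_apply_one_eq_deriv
  rwa [h2] at h1

lemma ev_deriv_congr {f φ : ℂ → ℂ} (h : ∀ᶠ x in 𝓝[≠] (0:ℂ), f x = φ x) :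
    ∀ᶠ x in 𝓝[≠] (0:ℂ), deriv f x = deriv φ x := by
  rw [eventually_nhdsWithin_iff] at h ⊢
  obtain ⟨t, ht, hto, h0t⟩ := eventually_nhds_iff.1 h
  refine eventually_nhds_iff.2 ⟨t, fun x hx hxne => ?_, hto, h0t⟩
  have : f =ᶠ[𝓝 x] φ := by
    filter_upwards [IsOpen.mem_nhds (hto.inter isOpen_ne) ⟨hx, hxne⟩] with y hy using ht y hy.1 hy.2
  exact this.deriv_eq

lemma ev_ne : ∀ᶠ x in 𝓝[≠] (0:ℂ), x ≠ 0 := eventually_mem_nhdsWithin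

lemma ev_deriv_g {g : ℂ → ℂ} {b : ℤ} (hg : ∀ᶠ x in 𝓝[≠] (0:ℂ), g x = x ^ b) :
    ∀ᶠ x in 𝓝[≠] (0:ℂ), deriv g x = (b:ℂ) * x ^ (b - 1) := by
  filter_upwards [ev_deriv_congr hg] with x hx
  rw [hx, deriv_zpow]

lemma ev_deriv_f {f h : ℂ → ℂ} {a : ℤ} (hh : AnalyticAt ℂ h 0)
    (hf : ∀ᶠ x in 𝓝[≠] (0:ℂ), f x = x ^ a * h x) :
    ∀ᶠ x in 𝓝[≠] (0:ℂ),
      deriv f x = x ^ (a - 1) * ((a:ℂ) * h x + x * deriv h x) := by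
  have hdh : ∀ᶠ x in 𝓝[≠] (0:ℂ), DifferentiableAt ℂ h x :=
    nhdsWithin_le_nhds (hh.eventually_analyticAt.mono fun y hy => hy.differentiableAt)
  filter_upwards [ev_deriv_congr hf, ev_ne, hdh] with x hx hne hd
  rw [hx, deriv_fun_mul (differentiableAt_zpow.2 (Or.inl hne)) hd, deriv_zpow]
  have hxa : x ^ a = x ^ (a - 1) * x := by
    rw [← zpow_add_one₀ hne, sub_add_cancel]
  rw [hxa]; ring

lemma deriv_xK_div {K L : ℂ → ℂ} (hK : AnalyticAt ℂ K 0) (hL : AnalyticAt ℂ L 0)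
    (hK0 : K 0 ≠ 0) (hL0 : L 0 ≠ 0) :
    deriv (fun x => (x * K x) / L x) 0 ≠ 0 := by
  have hr : DifferentiableAt ℂ (fun x => K x / L x) 0 :=
    hK.differentiableAt.div hL.differentiableAt hL0
  have he : (fun x : ℂ => (x * K x) / L x) = fun x => x * (K x / L x) := by
    funext x; rw [mul_div_assoc]
  rw [he, deriv_fun_mul differentiableAt_fun_id hr]
  simp only [deriv_id'', one_mul, zero_mul]
  simpa using div_ne_zero hK0 hL0

lemma zpow_rel (x : ℂ) (hx : x ≠ 0) (e1 e2 m : ℤ) (k : ℕ) (h : e1 + e2 = m + k) :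
    x ^ e1 * x ^ e2 = x ^ m * x ^ k := by
  rw [← zpow_natCast x k, ← zpow_add₀ hx, ← zpow_add₀ hx, h]

lemma zpow_rel1 (x : ℂ) (hx : x ≠ 0) (e m : ℤ) (k : ℕ) (h : e = m + k) :
    x ^ e = x ^ m * x ^ k := by
  rw [← zpow_natCast x k, ← zpow_add₀ hx, h]

lemma zpow_relx (x : ℂ) (hx : x ≠ 0) (e : ℤ) (k : ℕ) (h : e + 1 = k) :
    x ^ e * x = x ^ k := by
  rw [← zpow_add_one₀ hx, h, zpow_natCast]

/-- If g has order b = ±1 at the point (i.e. g is an immersion into ℂP¹ there, the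
point being taken as 0 in a local coordinate in which g(x) = xᵇ), then for any
meromorphic f (either constant, or f(x) = xᵃh(x) with h analytic, h(0) ≠ 0), the
projective curve 𝓑(f,g) = [g' : fg' - ½f'g : gg' : ½f'] is an immersion at the point:
after factoring out the common power xᵐ (m the minimal order of the four components,
so that the components become analytic functions u i with some u i nonvanishing at 0),
the map into the corresponding affine chart has nonzero derivative at 0 — equivalently,
the smallest and second smallest orders of the components differ by exactly 1. -/
theorem stmt11 (f g : ℂ → ℂ) (b : ℤ) (hb : b = 1 ∨ b = -1)
    (hg : ∀ᶠ x in 𝓝[≠] (0 : ℂ), g x = x ^ b)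
    (hf : (∃ c : ℂ, ∀ᶠ x in 𝓝[≠] (0 : ℂ), f x = c) ∨
      (∃ a : ℤ, ∃ h : ℂ → ℂ, AnalyticAt ℂ h 0 ∧ h 0 ≠ 0 ∧
        ∀ᶠ x in 𝓝[≠] (0 : ℂ), f x = x ^ a * h x)) :
    ∃ (m : ℤ) (u : Fin 4 → ℂ → ℂ),
      (∀ i, AnalyticAt ℂ (u i) 0) ∧
      (∀ᶠ x in 𝓝[≠] (0 : ℂ),
        deriv g x = x ^ m * u 0 x ∧
        f x * deriv g x - (1/2) * deriv f x * g x = x ^ m * u 1 x ∧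
        g x * deriv g x = x ^ m * u 2 x ∧
        (1/2) * deriv f x = x ^ m * u 3 x) ∧
      (∃ i, u i 0 ≠ 0) ∧
      (∃ i j, u i 0 ≠ 0 ∧ deriv (fun x => u j x / u i x) 0 ≠ 0) := by
  rcases hf with ⟨c, hc⟩ | ⟨a, h, hh, hh0, hfa⟩
  · -- f eventually constant
    have df : ∀ᶠ x in 𝓝[≠] (0:ℂ), deriv f x = 0 := by
      filter_upwards [ev_deriv_congr hc] with x hx; simpa using hx
    rcases hb with rfl | rfl
    · refine ⟨0, ![fun _ => 1, fun _ => c, fun x => x * 1, fun _ => 0], ?_, ?_,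
        ⟨0, by norm_num⟩, 0, 2, by norm_num, ?_⟩
      · intro i; fin_cases i <;>
          simp only [Matrix.cons_val_zero, Matrix.cons_val_one, Matrix.head_cons,
            Matrix.cons_val_two, Matrix.tail_cons, Matrix.cons_val_three, Fin.isValue]
        · exact analyticAt_const
        · exact analyticAt_const
        · exact analyticAt_id.mul analyticAt_const
        · exact analyticAt_const
      · filter_upwards [hg, ev_deriv_g hg, hc, df, ev_ne] with x hgx hdg hfx hdf hne
        simp only [Matrix.cons_val_zero, Matrix.cons_val_one, Matrix.head_cons,
          Matrix.cons_val_two, Matrix.tail_cons, Matrix.cons_val_three]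
        rw [hgx, hdg, hdf, hfx]
        norm_num
      · simp only [Matrix.cons_val_zero, Matrix.cons_val_two, Matrix.tail_cons, Matrix.head_cons]
        exact deriv_xK_div analyticAt_const analyticAt_const one_ne_zero one_ne_zero
    · refine ⟨-3, ![fun x => x * (-1), fun x => x * (-c), fun _ => (-1:ℂ), fun _ => 0], ?_, ?_,
        ⟨2, by simp⟩, 2, 0, by simp, ?_⟩
      · intro i; fin_cases i <;>
          simp only [Matrix.cons_val_zero, Matrix.cons_val_one, Matrix.head_cons,
            Matrix.cons_val_two, Matrix.tail_cons, Matrix.cons_val_three, Fin.isValue]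
        · exact analyticAt_id.mul analyticAt_const
        · exact analyticAt_id.mul analyticAt_const
        · exact analyticAt_const
        · exact analyticAt_const
      · filter_upwards [hg, ev_deriv_g hg, hc, df, ev_ne] with x hgx hdg hfx hdf hne
        simp only [Matrix.cons_val_zero, Matrix.cons_val_one, Matrix.head_cons,
          Matrix.cons_val_two, Matrix.tail_cons, Matrix.cons_val_three]
        rw [hgx, hdg, hdf, hfx]
        push_cast
        refine ⟨?_, ?_, ?_, ?_⟩
        · linear_combination (-1:ℂ) * zpow_rel1 x hne (-2) (-3) 1 (by omega)
        · linear_combination (-c) * zpow_rel1 x hne (-2) (-3) 1 (by omega)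
        · linear_combination (-1:ℂ) * zpow_rel x hne (-1) (-2) (-3) 0 (by omega)
        · ring
      · simp only [Matrix.cons_val_zero, Matrix.cons_val_two, Matrix.tail_cons, Matrix.head_cons]
        exact deriv_xK_div analyticAt_const analyticAt_const (by norm_num) (by norm_num)
  · -- f = x^a * h
    have hdh := analyticAt_deriv hh
    have df := ev_deriv_f hh hfa
    have hH : AnalyticAt ℂ (fun x => (a:ℂ) * h x + x * deriv h x) 0 :=
      (analyticAt_const.mul hh).add (analyticAt_id.mul hdh)
    rcases hb with rfl | rfl
    · -- b = 1
      rcases (show (∃ n : ℕ, a = n + 1) ∨ a = 0 ∨ (∃ n : ℕ, a = -1 - n) by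
          rcases lt_trichotomy a 0 with h1 | h1 | h1
          · exact Or.inr (Or.inr ⟨(-1 - a).toNat, by omega⟩)
          · exact Or.inr (Or.inl h1)
          · exact Or.inl ⟨(a - 1).toNat, by omega⟩) with ⟨n, hn⟩ | hn | ⟨n, hn⟩
      · -- b = 1, a = n + 1 ≥ 1
        refine ⟨0, ![fun _ => 1,
            fun x => x^(n+1) * (1 * h x - (1/2) * ((a:ℂ) * h x + x * deriv h x)),
            fun x => x * 1,
            fun x => (1/2) * (x^n * ((a:ℂ) * h x + x * deriv h x))], ?_, ?_,
          ⟨0, by norm_num⟩, 0, 2, by norm_num, ?_⟩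
        · intro i; fin_cases i <;>
            simp only [Matrix.cons_val_zero, Matrix.cons_val_one, Matrix.head_cons,
              Matrix.cons_val_two, Matrix.tail_cons, Matrix.cons_val_three, Fin.isValue]
          · exact analyticAt_const
          · exact (analyticAt_id.pow _).mul
              ((analyticAt_const.mul hh).sub (analyticAt_const.mul hH))
          · exact analyticAt_id.mul analyticAt_const
          · exact analyticAt_const.mul ((analyticAt_id.pow _).mul hH)
        · filter_upwards [hg, ev_deriv_g hg, hfa, df, ev_ne] with x hgx hdg hfx hdf hne
          simp only [Matrix.cons_val_zero, Matrix.cons_val_one, Matrix.head_cons,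
            Matrix.cons_val_two, Matrix.tail_cons, Matrix.cons_val_three]
          rw [hgx, hdg, hdf, hfx]
          push_cast
          refine ⟨by norm_num, ?_, ?_, ?_⟩
          · linear_combination (h x) * zpow_rel x hne a 0 0 (n+1) (by omega)
              - (1/2) * ((a:ℂ) * h x + x * deriv h x) * zpow_rel x hne (a-1) 1 0 (n+1) (by omega)
          · linear_combination zpow_rel x hne 1 0 0 1 (by omega)
          · linear_combination (1/2) * ((a:ℂ) * h x + x * deriv h x) *
              zpow_rel1 x hne (a-1) 0 n (by omega)
        · simp only [Matrix.cons_val_zero, Matrix.cons_val_two, Matrix.tail_cons, Matrix.head_cons]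
          exact deriv_xK_div analyticAt_const analyticAt_const one_ne_zero one_ne_zero
      · -- b = 1, a = 0
        subst hn
        refine ⟨0, ![fun _ => 1,
            fun x => 1 * h x - (1/2) * ((0:ℂ) * h x + x * deriv h x),
            fun x => x * 1,
            fun x => (1/2) * deriv h x], ?_, ?_,
          ⟨0, by norm_num⟩, 0, 2, by norm_num, ?_⟩
        · intro i; fin_cases i <;>
            simp only [Matrix.cons_val_zero, Matrix.cons_val_one, Matrix.head_cons,
              Matrix.cons_val_two, Matrix.tail_cons, Matrix.cons_val_three, Fin.isValue]
          · exact analyticAt_const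
          · exact (analyticAt_const.mul hh).sub (analyticAt_const.mul
              ((analyticAt_const.mul hh).add (analyticAt_id.mul hdh)))
          · exact analyticAt_id.mul analyticAt_const
          · exact analyticAt_const.mul hdh
        · filter_upwards [hg, ev_deriv_g hg, hfa, df, ev_ne] with x hgx hdg hfx hdf hne
          simp only [Matrix.cons_val_zero, Matrix.cons_val_one, Matrix.head_cons,
            Matrix.cons_val_two, Matrix.tail_cons, Matrix.cons_val_three]
          rw [hgx, hdg, hdf, hfx]
          push_cast
          refine ⟨by norm_num, ?_, ?_, ?_⟩
          · linear_combination (h x * x^(0:ℤ)) * zpow_zero x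
              - (1/2) * (x * deriv h x) * zpow_rel x hne (-1) 1 0 0 (by omega)
          · linear_combination zpow_rel x hne 1 0 0 1 (by omega)
          · linear_combination (1/2) * deriv h x * zpow_relx x hne (-1) 0 (by omega)
              - (1/2) * deriv h x * zpow_zero x
        · simp only [Matrix.cons_val_zero, Matrix.cons_val_two, Matrix.tail_cons, Matrix.head_cons]
          exact deriv_xK_div analyticAt_const analyticAt_const one_ne_zero one_ne_zero
      · -- b = 1, a = -1 - n ≤ -1
        have ha0 : (a:ℂ) ≠ 0 := Int.cast_ne_zero.2 (by omega)
        have ha2 : (a:ℂ) ≠ 2 := by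
          intro hcon
          have : a = 2 := by exact_mod_cast hcon
          omega
        have hK0 : 1 * h 0 - (1/2) * ((a:ℂ) * h 0 + 0 * deriv h 0) ≠ 0 := by
          have e : 1 * h 0 - (1/2) * ((a:ℂ) * h 0 + 0 * deriv h 0)
              = (1 - (a:ℂ)/2) * h 0 := by ring
          rw [e]
          refine mul_ne_zero (fun hcon => ha2 ?_) hh0
          linear_combination (-2 : ℂ) * hcon
        have hL0 : (1/2 : ℂ) * ((a:ℂ) * h 0 + 0 * deriv h 0) ≠ 0 := by
          have e : (1/2 : ℂ) * ((a:ℂ) * h 0 + 0 * deriv h 0) = (1/2) * ((a:ℂ) * h 0) := by ring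
          rw [e]
          exact mul_ne_zero (by norm_num) (mul_ne_zero ha0 hh0)
        refine ⟨a - 1, ![fun x => x^(n+2) * 1,
            fun x => x * (1 * h x - (1/2) * ((a:ℂ) * h x + x * deriv h x)),
            fun x => x^(n+3) * 1,
            fun x => (1/2) * ((a:ℂ) * h x + x * deriv h x)], ?_, ?_,
          ⟨3, ?_⟩, 3, 1, ?_, ?_⟩
        · intro i; fin_cases i <;>
            simp only [Matrix.cons_val_zero, Matrix.cons_val_one, Matrix.head_cons,
              Matrix.cons_val_two, Matrix.tail_cons, Matrix.cons_val_three, Fin.isValue]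
          · exact (analyticAt_id.pow _).mul analyticAt_const
          · exact analyticAt_id.mul ((analyticAt_const.mul hh).sub (analyticAt_const.mul hH))
          · exact (analyticAt_id.pow _).mul analyticAt_const
          · exact analyticAt_const.mul hH
        · filter_upwards [hg, ev_deriv_g hg, hfa, df, ev_ne] with x hgx hdg hfx hdf hne
          simp only [Matrix.cons_val_zero, Matrix.cons_val_one, Matrix.head_cons,
            Matrix.cons_val_two, Matrix.tail_cons, Matrix.cons_val_three]
          rw [hgx, hdg, hdf, hfx]
          push_cast
          refine ⟨?_, ?_, ?_, by ring⟩
          · linear_combination zpow_rel1 x hne 0 (a-1) (n+2) (by omega)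
          · linear_combination (h x) * zpow_rel x hne a 0 (a-1) 1 (by omega)
              - (1/2) * ((a:ℂ) * h x + x * deriv h x) * zpow_rel x hne (a-1) 1 (a-1) 1 (by omega)
          · linear_combination zpow_rel x hne 1 0 (a-1) (n+3) (by omega)
        · simp only [Matrix.cons_val_three, Matrix.tail_cons, Matrix.head_cons]
          exact hL0
        · simp only [Matrix.cons_val_three, Matrix.tail_cons, Matrix.head_cons]
          exact hL0
        · simp only [Matrix.cons_val_one, Matrix.head_cons, Matrix.cons_val_three,
            Matrix.tail_cons]
          exact deriv_xK_div ((analyticAt_const.mul hh).sub (analyticAt_const.mul hH))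
            (analyticAt_const.mul hH) hK0 hL0
    · -- b = -1
      rcases (show (∃ n : ℕ, a = n - 1) ∨ a = -2 ∨ (∃ n : ℕ, a = -3 - n) by
          rcases (show a ≥ -1 ∨ a = -2 ∨ a ≤ -3 by omega) with h1 | h1 | h1
          · exact Or.inl ⟨(a + 1).toNat, by omega⟩
          · exact Or.inr (Or.inl h1)
          · exact Or.inr (Or.inr ⟨(-3 - a).toNat, by omega⟩)) with ⟨n, hn⟩ | hn | ⟨n, hn⟩
      · -- b = -1, a = n - 1 ≥ -1
        refine ⟨-3, ![fun x => x * (-1),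
            fun x => x^n * ((-1:ℂ) * h x - (1/2) * ((a:ℂ) * h x + x * deriv h x)),
            fun _ => (-1:ℂ),
            fun x => (1/2) * (x^(n+1) * ((a:ℂ) * h x + x * deriv h x))], ?_, ?_,
          ⟨2, by simp⟩, 2, 0, by simp, ?_⟩
        · intro i; fin_cases i <;>
            simp only [Matrix.cons_val_zero, Matrix.cons_val_one, Matrix.head_cons,
              Matrix.cons_val_two, Matrix.tail_cons, Matrix.cons_val_three, Fin.isValue]
          · exact analyticAt_id.mul analyticAt_const
          · exact (analyticAt_id.pow _).mul
              ((analyticAt_const.mul hh).sub (analyticAt_const.mul hH))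
          · exact analyticAt_const
          · exact analyticAt_const.mul ((analyticAt_id.pow _).mul hH)
        · filter_upwards [hg, ev_deriv_g hg, hfa, df, ev_ne] with x hgx hdg hfx hdf hne
          simp only [Matrix.cons_val_zero, Matrix.cons_val_one, Matrix.head_cons,
            Matrix.cons_val_two, Matrix.tail_cons, Matrix.cons_val_three]
          rw [hgx, hdg, hdf, hfx]
          push_cast
          refine ⟨?_, ?_, ?_, ?_⟩
          · linear_combination (-1:ℂ) * zpow_rel1 x hne (-2) (-3) 1 (by omega)
          · linear_combination (-(h x)) * zpow_rel x hne a (-2) (-3) n (by omega)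
              - (1/2) * ((a:ℂ) * h x + x * deriv h x) * zpow_rel x hne (a-1) (-1) (-3) n (by omega)
          · linear_combination (-1:ℂ) * zpow_rel x hne (-1) (-2) (-3) 0 (by omega)
          · linear_combination (1/2) * ((a:ℂ) * h x + x * deriv h x) *
              zpow_rel1 x hne (a-1) (-3) (n+1) (by omega)
        · simp only [Matrix.cons_val_zero, Matrix.cons_val_two, Matrix.tail_cons, Matrix.head_cons]
          exact deriv_xK_div analyticAt_const analyticAt_const (by norm_num) (by norm_num)
      · -- b = -1, a = -2
        subst hn
        refine ⟨-3, ![fun x => x * (-1),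
            fun x => (-1/2) * deriv h x,
            fun _ => (-1:ℂ),
            fun x => (1/2) * ((-2:ℂ) * h x + x * deriv h x)], ?_, ?_,
          ⟨2, by simp⟩, 2, 0, by simp, ?_⟩
        · intro i; fin_cases i <;>
            simp only [Matrix.cons_val_zero, Matrix.cons_val_one, Matrix.head_cons,
              Matrix.cons_val_two, Matrix.tail_cons, Matrix.cons_val_three, Fin.isValue]
          · exact analyticAt_id.mul analyticAt_const
          · exact analyticAt_const.mul hdh
          · exact analyticAt_const
          · exact analyticAt_const.mul ((analyticAt_const.mul hh).add (analyticAt_id.mul hdh))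
        · filter_upwards [hg, ev_deriv_g hg, hfa, df, ev_ne] with x hgx hdg hfx hdf hne
          simp only [Matrix.cons_val_zero, Matrix.cons_val_one, Matrix.head_cons,
            Matrix.cons_val_two, Matrix.tail_cons, Matrix.cons_val_three]
          rw [hgx, hdg, hdf, hfx]
          push_cast
          refine ⟨?_, ?_, ?_, ?_⟩
          · linear_combination (-1:ℂ) * zpow_rel1 x hne (-2) (-3) 1 (by omega)
          · linear_combination (-(h x)) * zpow_rel x hne (-2) (-2) (-4) 0 (by omega)
              - (1/2) * ((-2:ℂ) * h x + x * deriv h x) * zpow_rel x hne (-3) (-1) (-4) 0 (by omega)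
              + (1/2) * (deriv h x) * zpow_rel1 x hne (-3) (-4) 1 (by omega)
          · linear_combination (-1:ℂ) * zpow_rel x hne (-1) (-2) (-3) 0 (by omega)
          · ring
        · simp only [Matrix.cons_val_zero, Matrix.cons_val_two, Matrix.tail_cons, Matrix.head_cons]
          exact deriv_xK_div analyticAt_const analyticAt_const (by norm_num) (by norm_num)
      · -- b = -1, a = -3 - n ≤ -3
        have ha0 : (a:ℂ) ≠ 0 := Int.cast_ne_zero.2 (by omega)
        have ha2 : (a:ℂ) ≠ -2 := by
          intro hcon
          have : a = -2 := by exact_mod_cast hcon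
          omega
        have hK0 : (-1:ℂ) * h 0 - (1/2) * ((a:ℂ) * h 0 + 0 * deriv h 0) ≠ 0 := by
          have e : (-1:ℂ) * h 0 - (1/2) * ((a:ℂ) * h 0 + 0 * deriv h 0)
              = (-1 - (a:ℂ)/2) * h 0 := by ring
          rw [e]
          refine mul_ne_zero (fun hcon => ha2 ?_) hh0
          linear_combination (-2 : ℂ) * hcon
        have hL0 : (1/2 : ℂ) * ((a:ℂ) * h 0 + 0 * deriv h 0) ≠ 0 := by
          have e : (1/2 : ℂ) * ((a:ℂ) * h 0 + 0 * deriv h 0) = (1/2) * ((a:ℂ) * h 0) := by ring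
          rw [e]
          exact mul_ne_zero (by norm_num) (mul_ne_zero ha0 hh0)
        refine ⟨a - 2, ![fun x => x^(n+3) * (-1),
            fun x => (-1:ℂ) * h x - (1/2) * ((a:ℂ) * h x + x * deriv h x),
            fun x => x^(n+2) * (-1),
            fun x => x * ((1/2) * ((a:ℂ) * h x + x * deriv h x))], ?_, ?_,
          ⟨1, ?_⟩, 1, 3, ?_, ?_⟩
        · intro i; fin_cases i <;>
            simp only [Matrix.cons_val_zero, Matrix.cons_val_one, Matrix.head_cons,
              Matrix.cons_val_two, Matrix.tail_cons, Matrix.cons_val_three, Fin.isValue]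
          · exact (analyticAt_id.pow _).mul analyticAt_const
          · exact (analyticAt_const.mul hh).sub (analyticAt_const.mul hH)
          · exact (analyticAt_id.pow _).mul analyticAt_const
          · exact analyticAt_id.mul (analyticAt_const.mul hH)
        · filter_upwards [hg, ev_deriv_g hg, hfa, df, ev_ne] with x hgx hdg hfx hdf hne
          simp only [Matrix.cons_val_zero, Matrix.cons_val_one, Matrix.head_cons,
            Matrix.cons_val_two, Matrix.tail_cons, Matrix.cons_val_three]
          rw [hgx, hdg, hdf, hfx]
          push_cast
          refine ⟨?_, ?_, ?_, ?_⟩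
          · linear_combination (-1:ℂ) * zpow_rel1 x hne (-2) (a-2) (n+3) (by omega)
          · linear_combination (-(h x)) * zpow_rel x hne a (-2) (a-2) 0 (by omega)
              - (1/2) * ((a:ℂ) * h x + x * deriv h x) * zpow_rel x hne (a-1) (-1) (a-2) 0 (by omega)
          · linear_combination (-1:ℂ) * zpow_rel x hne (-1) (-2) (a-2) (n+2) (by omega)
          · linear_combination (1/2) * ((a:ℂ) * h x + x * deriv h x) *
              zpow_rel1 x hne (a-1) (a-2) 1 (by omega)
        · simp only [Matrix.cons_val_one, Matrix.head_cons]
          exact hK0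
        · simp only [Matrix.cons_val_one, Matrix.head_cons]
          exact hK0
        · simp only [Matrix.cons_val_one, Matrix.head_cons, Matrix.cons_val_three,
            Matrix.tail_cons]
          exact deriv_xK_div (analyticAt_const.mul hH)
            ((analyticAt_const.mul hh).sub (analyticAt_const.mul hH)) hL0 hK0
end
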